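/- Let λ₁, λ₂ be coprime positive integers and S = {0, λ₁, λ₁+λ₂}. Then the maximum packing density satisfies d_p(S) = max( ⌊(1/3)(λ₁+2λ₂)⌋/(λ₁+2λ₂), ⌊(1/3)(2λ₁+λ₂)⌋/(2λ₁+λ₂) ). -/

import Mathlib

open Filter Set
set_option maxHeartbeats 1000000

/-- The translateSet `S + t` of a set of integers. -/
def translateSet (S : Set ℤ) (t : ℤ) : Set ℤ := (· + t) '' S

/-- Upper density of a set of integers. -/
noncomputable def upperDensity (A : Set ℤ) : ℝ :=
  Filter.limsup (fun n : ℕ => ((A ∩ Set.Icc (-(n : ℤ)) (n : ℤ)).ncard : ℝ) / (2 * n + 1)) Filter.atTop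

/-- Lower density of a set of integers. -/
noncomputable def lowerDensity (A : Set ℤ) : ℝ :=
  Filter.liminf (fun n : ℕ => ((A ∩ Set.Icc (-(n : ℤ)) (n : ℤ)).ncard : ℝ) / (2 * n + 1)) Filter.atTop

/-- `A` is `S`-covering: every integer lies in some translateSet `S + a`, `a ∈ A`. -/
def SCovering (S A : Set ℤ) : Prop := ∀ t : ℤ, ∃ a ∈ A, t ∈ translateSet S a

/-- `A` is `S`-blocking: `A` meets every translateSet of `S`. -/
def SBlocking (S A : Set ℤ) : Prop := ∀ t : ℤ, (A ∩ translateSet S t).Nonempty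

/-- `A` is `S`-free: `A` contains no translateSet of `S`. -/
def SFree (S A : Set ℤ) : Prop := ∀ t : ℤ, ¬ translateSet S t ⊆ A

/-- `A` is `S`-packing: distinct translates `S + a₁`, `S + a₂` with `a₁, a₂ ∈ A` are disjoint. -/
def SPacking (S A : Set ℤ) : Prop :=
  ∀ a₁ ∈ A, ∀ a₂ ∈ A, a₁ ≠ a₂ → Disjoint (translateSet S a₁) (translateSet S a₂)

/-- Maximum packing density of `S`. -/
noncomputable def dP (S : Set ℤ) : ℝ := sSup (upperDensity '' {A | SPacking S A})

/-- Minimum covering density of `S`. -/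
noncomputable def dC (S : Set ℤ) : ℝ := sInf (lowerDensity '' {A | SCovering S A})

/-- Minimum blocking density of `S`. -/
noncomputable def dB (S : Set ℤ) : ℝ := sInf (lowerDensity '' {A | SBlocking S A})

/-- `d_f(S)`: supremum of upper densities of `S`-free sets. -/
noncomputable def dF (S : Set ℤ) : ℝ := sSup (upperDensity '' {A | SFree S A})

/-- `d_f(S, -S)`: supremum of upper densities of sets free of translates of both `S` and `-S`. -/
noncomputable def dF2 (S : Set ℤ) : ℝ := sSup (upperDensity '' {A | SFree S A ∧ SFree (-S) A})

/-! ### Auxiliary development -/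

open scoped Classical

noncomputable def cnt (A : Set ℤ) (s t : ℤ) : ℕ :=
  ((Finset.Ico s t).filter (fun x => x ∈ A)).card

lemma cnt_split (A : Set ℤ) {s u t : ℤ} (h1 : s ≤ u) (h2 : u ≤ t) :
    cnt A s t = cnt A s u + cnt A u t := by
  unfold cnt
  rw [← Finset.card_union_of_disjoint (Finset.disjoint_filter_filter
    (Finset.Ico_disjoint_Ico_consecutive s u t)), ← Finset.filter_union,
    Finset.Ico_union_Ico_eq_Ico h1 h2]

lemma cnt_le_length (A : Set ℤ) {s t : ℤ} (h : s ≤ t) : (cnt A s t : ℤ) ≤ t - s := by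
  unfold cnt
  calc ((Finset.filter (fun x => x ∈ A) (Finset.Ico s t)).card : ℤ)
      ≤ ((Finset.Ico s t).card : ℤ) := by
        exact_mod_cast Finset.card_le_card (Finset.filter_subset _ _)
    _ ≤ t - s := by rw [Int.card_Ico]; omega

lemma cnt_mono_right (A : Set ℤ) {s t t' : ℤ} (h : t ≤ t') : cnt A s t ≤ cnt A s t' := by
  unfold cnt
  exact Finset.card_le_card (Finset.filter_subset_filter _ (Finset.Ico_subset_Ico le_rfl h))

def Avoid (a b : ℤ) (A : Set ℤ) : Prop :=
  ∀ x ∈ A, ∀ y ∈ A, x - y ≠ a ∧ x - y ≠ b ∧ x - y ≠ a + b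

/-! ### Two-window counting lemma -/

def j1 (a b y : ℤ) : ℤ ⊕ ℤ :=
  if y < b then .inl y else if y < a then .inr y
  else if y < a + b then .inl (y - a) else .inl (y - (a + b))

def j2 (a b y : ℤ) : ℤ ⊕ ℤ :=
  if y < b then .inr y else if y < a + b then .inr (y - b) else .inr (y - (a + b))

def trip (a b z : ℤ) : ℤ ⊕ ℤ → Finset ℤ
  | .inl x => {z + x, z + x + a, z + x + (a + b)}
  | .inr x => {z + x, z + x + b, z + x + (a + b)}

lemma mem_trip_j1 {a b z y : ℤ} (hz : z ≤ y) (hy : y < z + (a + 2 * b)) :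
    y ∈ trip a b z (j1 a b (y - z)) := by
  unfold j1
  split_ifs <;> simp [trip, Finset.mem_insert] <;> omega

lemma mem_trip_j2 {a b z y : ℤ} (hz : z ≤ y) (hy : y < z + (2 * a + b)) :
    y ∈ trip a b z (j2 a b (y - z)) := by
  unfold j2
  split_ifs <;> simp [trip, Finset.mem_insert] <;> omega

lemma j1_mem_J {a b z y : ℤ} (ha : 0 < a) (hb : 0 < b) (hz : z ≤ y)
    (hy : y < z + (a + 2 * b)) :
    j1 a b (y - z) ∈ (Finset.Ico (0:ℤ) b).disjSum (Finset.Ico (0:ℤ) a) := by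
  unfold j1
  split_ifs <;>
    simp only [Finset.inl_mem_disjSum, Finset.inr_mem_disjSum, Finset.mem_Ico] <;> omega

lemma j2_mem_J {a b z y : ℤ} (ha : 0 < a) (hb : 0 < b) (hba : b ≤ a) (hz : z ≤ y)
    (hy : y < z + (2 * a + b)) :
    j2 a b (y - z) ∈ (Finset.Ico (0:ℤ) b).disjSum (Finset.Ico (0:ℤ) a) := by
  unfold j2
  split_ifs <;>
    simp only [Finset.inl_mem_disjSum, Finset.inr_mem_disjSum, Finset.mem_Ico] <;> omega

lemma j1_ne_j2 {a b y : ℤ} (hb : 0 < b) (ha : 0 < a) : j1 a b y ≠ j2 a b y := by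
  unfold j1 j2
  split_ifs <;> simp <;> omega

lemma trip_unique {a b z : ℤ} {A : Set ℤ} (hA : Avoid a b A) (j : ℤ ⊕ ℤ) {u v : ℤ}
    (hu : u ∈ trip a b z j) (hv : v ∈ trip a b z j) (huA : u ∈ A) (hvA : v ∈ A) : u = v := by
  have H1 := hA u huA v hvA
  have H2 := hA v hvA u huA
  cases j with
  | inl x =>
      simp only [trip, Finset.mem_insert, Finset.mem_singleton] at hu hv
      rcases hu with rfl | rfl | rfl <;> rcases hv with h | h | h <;> omega
  | inr x =>
      simp only [trip, Finset.mem_insert, Finset.mem_singleton] at hu hv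
      rcases hu with rfl | rfl | rfl <;> rcases hv with h | h | h <;> omega

lemma twoWindow {a b : ℤ} (ha : 0 < a) (hb : 0 < b) (hba : b ≤ a) {A : Set ℤ}
    (hA : Avoid a b A) (z : ℤ) :
    (cnt A z (z + (a + 2 * b)) : ℤ) + cnt A z (z + (2 * a + b)) ≤ a + b := by
  classical
  set W1 := (Finset.Ico z (z + (a + 2 * b))).filter (fun x => x ∈ A) with hW1
  set W2 := (Finset.Ico z (z + (2 * a + b))).filter (fun x => x ∈ A) with hW2
  set J := (Finset.Ico (0:ℤ) b).disjSum (Finset.Ico (0:ℤ) a) with hJ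
  have key : (W1.disjSum W2).card ≤ J.card := by
    apply Finset.card_le_card_of_injOn
      (Sum.elim (fun y => j1 a b (y - z)) (fun y => j2 a b (y - z)))
    · intro p hp
      cases p with
      | inl y =>
          rw [Finset.mem_coe, Finset.inl_mem_disjSum, hW1, Finset.mem_filter, Finset.mem_Ico] at hp
          exact j1_mem_J ha hb hp.1.1 hp.1.2
      | inr y =>
          rw [Finset.mem_coe, Finset.inr_mem_disjSum, hW2, Finset.mem_filter, Finset.mem_Ico] at hp
          exact j2_mem_J ha hb hba hp.1.1 hp.1.2
    · intro p hp q hq hpq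
      have memW1 : ∀ y, Sum.inl y ∈ W1.disjSum W2 → y ∈ A ∧ z ≤ y ∧ y < z + (a + 2*b) := by
        intro y hy
        rw [Finset.inl_mem_disjSum, hW1, Finset.mem_filter, Finset.mem_Ico] at hy
        exact ⟨hy.2, hy.1.1, hy.1.2⟩
      have memW2 : ∀ y, Sum.inr y ∈ W1.disjSum W2 → y ∈ A ∧ z ≤ y ∧ y < z + (2*a + b) := by
        intro y hy
        rw [Finset.inr_mem_disjSum, hW2, Finset.mem_filter, Finset.mem_Ico] at hy
        exact ⟨hy.2, hy.1.1, hy.1.2⟩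
      cases p with
      | inl y =>
          obtain ⟨hyA, hy1, hy2⟩ := memW1 y hp
          cases q with
          | inl y' =>
              obtain ⟨hy'A, hy'1, hy'2⟩ := memW1 y' hq
              simp only [Sum.elim_inl] at hpq
              have h1 := mem_trip_j1 (a := a) (b := b) hy1 hy2
              have h2 := mem_trip_j1 (a := a) (b := b) hy'1 hy'2
              rw [← hpq] at h2
              have := trip_unique hA _ h1 h2 hyA hy'A
              rw [this]
          | inr y' =>
              obtain ⟨hy'A, hy'1, hy'2⟩ := memW2 y' hq
              simp only [Sum.elim_inl, Sum.elim_inr] at hpq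
              have h1 := mem_trip_j1 (a := a) (b := b) hy1 hy2
              have h2 := mem_trip_j2 (a := a) (b := b) hy'1 hy'2
              rw [← hpq] at h2
              have heq : y = y' := trip_unique hA _ h1 h2 hyA hy'A
              exfalso
              exact j1_ne_j2 hb ha (heq ▸ hpq)
      | inr y =>
          obtain ⟨hyA, hy1, hy2⟩ := memW2 y hp
          cases q with
          | inl y' =>
              obtain ⟨hy'A, hy'1, hy'2⟩ := memW1 y' hq
              simp only [Sum.elim_inl, Sum.elim_inr] at hpq
              have h1 := mem_trip_j2 (a := a) (b := b) hy1 hy2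
              have h2 := mem_trip_j1 (a := a) (b := b) hy'1 hy'2
              rw [← hpq] at h2
              have heq : y = y' := trip_unique hA _ h1 h2 hyA hy'A
              exfalso
              exact j1_ne_j2 hb ha (heq ▸ hpq.symm)
          | inr y' =>
              obtain ⟨hy'A, hy'1, hy'2⟩ := memW2 y' hq
              simp only [Sum.elim_inr] at hpq
              have h1 := mem_trip_j2 (a := a) (b := b) hy1 hy2
              have h2 := mem_trip_j2 (a := a) (b := b) hy'1 hy'2
              rw [← hpq] at h2
              have := trip_unique hA _ h1 h2 hyA hy'A
              rw [this]
  rw [Finset.card_disjSum, hJ, Finset.card_disjSum, Int.card_Ico, Int.card_Ico] at key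
  have e1 : cnt A z (z + (a + 2 * b)) = W1.card := rfl
  have e2 : cnt A z (z + (2 * a + b)) = W2.card := rfl
  rw [e1, e2]
  omega

/-! ### Extraction lemma -/

lemma extract_aux (A : Set ℤ) (β : ℝ) (hβ0 : 0 ≤ β) (hβ1 : β ≤ 1) (ℓ : ℤ) (hℓ : 0 ≤ ℓ)
    (e : ℤ) : ∀ k : ℕ, ∀ t : ℤ, t ≤ e → (e - t).toNat ≤ k →
    (∀ z, z ∈ A → t ≤ z → z + ℓ ≤ e → ∃ m, 1 ≤ m ∧ m ≤ ℓ ∧ ((cnt A z (z + m) : ℝ)) < β * m) →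
    ((cnt A t e : ℝ)) ≤ β * (e - t) + ℓ := by
  intro k
  induction k with
  | zero =>
      intro t ht hk _
      have hte : t = e := by omega
      subst hte
      have : cnt A t t = 0 := by unfold cnt; rw [Finset.Ico_self]; simp
      rw [this]
      have h2 : (0:ℝ) ≤ β * ((t:ℝ) - t) := by simp
      have h3 : (0:ℝ) ≤ (ℓ:ℝ) := by exact_mod_cast hℓ
      push_cast
      linarith
  | succ k ih =>
      intro t ht hk hyp
      by_cases hcz : cnt A t e = 0
      · rw [hcz]
        have h1 : (0:ℝ) ≤ β * ((e:ℝ) - t) := by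
          apply mul_nonneg hβ0
          have : (t:ℝ) ≤ e := by exact_mod_cast ht
          linarith
        have h3 : (0:ℝ) ≤ (ℓ:ℝ) := by exact_mod_cast hℓ
        push_cast
        linarith
      · set W := (Finset.Ico t e).filter (fun x => x ∈ A) with hW
        have hWne : W.Nonempty := by
          rw [Finset.nonempty_iff_ne_empty]
          intro hc
          exact hcz (by unfold cnt; rw [← hW, hc]; simp)
        set z := W.min' hWne with hz
        have hzW : z ∈ W := Finset.min'_mem _ _
        have hzA : z ∈ A := (Finset.mem_filter.1 hzW).2
        have hzt : t ≤ z ∧ z < e := by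
          have := (Finset.mem_filter.1 hzW).1
          rw [Finset.mem_Ico] at this
          exact this
        have h0 : cnt A t z = 0 := by
          unfold cnt
          rw [Finset.card_eq_zero, Finset.eq_empty_iff_forall_notMem]
          intro w hw
          rw [Finset.mem_filter, Finset.mem_Ico] at hw
          have hwW : w ∈ W := by
            rw [hW, Finset.mem_filter, Finset.mem_Ico]
            exact ⟨⟨hw.1.1, lt_of_lt_of_le hw.1.2 (le_of_lt hzt.2)⟩, hw.2⟩
          have := Finset.min'_le W w hwW
          omega
        have hsplit : cnt A t e = cnt A t z + cnt A z e :=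
          cnt_split A hzt.1 (le_of_lt hzt.2)
        by_cases hle : z + ℓ ≤ e
        · obtain ⟨m, hm1, hm2, hmlt⟩ := hyp z hzA hzt.1 hle
          by_cases hme : z + m ≤ e
          · have hs2 : cnt A z e = cnt A z (z + m) + cnt A (z + m) e :=
              cnt_split A (by omega) hme
            have hih := ih (z + m) (by omega) (by omega) (fun z' hz' ht' hl' =>
              hyp z' hz' (by omega) hl')
            have hmul : β * ((e:ℝ) - (z + m)) + β * m ≤ β * ((e:ℝ) - t) := by
              have : β * ((e:ℝ) - z) ≤ β * ((e:ℝ) - t) := by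
                apply mul_le_mul_of_nonneg_left _ hβ0
                have h1 : (t:ℝ) ≤ z := by exact_mod_cast hzt.1
                linarith
              push_cast at this ⊢
              nlinarith
            rw [hsplit, h0, hs2]
            push_cast
            push_cast at hih hmlt hmul
            linarith
          · have hmon : cnt A z e ≤ cnt A z (z + m) := cnt_mono_right A (by omega)
            have h1 : β * (m:ℝ) ≤ β * (ℓ:ℝ) := by
              apply mul_le_mul_of_nonneg_left _ hβ0
              exact_mod_cast hm2
            have h2 : β * (ℓ:ℝ) ≤ (ℓ:ℝ) := by
              have h3 : (0:ℝ) ≤ (ℓ:ℝ) := by exact_mod_cast hℓ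
              nlinarith
            have h3 : (0:ℝ) ≤ β * ((e:ℝ) - t) := by
              apply mul_nonneg hβ0
              have : (t:ℝ) ≤ e := by exact_mod_cast ht
              linarith
            rw [hsplit, h0]
            have : (cnt A z e : ℝ) ≤ (cnt A z (z + m) : ℝ) := by exact_mod_cast hmon
            push_cast
            linarith
        · have hlen : (cnt A z e : ℤ) ≤ e - z := cnt_le_length A (le_of_lt hzt.2)
          have h3 : (0:ℝ) ≤ β * ((e:ℝ) - t) := by
            apply mul_nonneg hβ0
            have : (t:ℝ) ≤ e := by exact_mod_cast ht
            linarith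
          rw [hsplit, h0]
          have h4 : (cnt A z e : ℝ) ≤ (e:ℝ) - z := by exact_mod_cast hlen
          have h5 : (e:ℝ) - z ≤ (ℓ:ℝ) := by
            have : e - z ≤ ℓ := by omega
            exact_mod_cast this
          push_cast
          linarith

lemma extract (A : Set ℤ) (β : ℝ) (hβ0 : 0 ≤ β) (hβ1 : β ≤ 1) (ℓ : ℤ) (hℓ : 0 ≤ ℓ)
    (x L : ℤ) (hL : 0 ≤ L)
    (h : β * L + ℓ < (cnt A x (x + L) : ℝ)) :
    ∃ z ∈ A, ∀ m : ℤ, 1 ≤ m → m ≤ ℓ → β * m ≤ (cnt A z (z + m) : ℝ) := by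
  by_contra hc
  push_neg at hc
  have hmain := extract_aux A β hβ0 hβ1 ℓ hℓ (x + L) (L.toNat) x (by omega) (by omega)
    (fun z hz _ _ => by
      obtain ⟨m, hm1, hm2, hm3⟩ := hc z hz
      exact ⟨m, hm1, hm2, hm3⟩)
  have : ((x:ℝ) + L - x) = (L:ℝ) := by ring
  rw [Int.cast_add] at hmain
  rw [this] at hmain
  linarith

/-! ### Packing iff avoiding -/

lemma packing_iff_avoid (a b : ℤ) (ha : 0 < a) (hb : 0 < b) (A : Set ℤ) :
    SPacking ({0, a, a + b} : Set ℤ) A ↔ Avoid a b A := by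
  constructor
  · intro hp x hx y hy
    by_cases hxy : x = y
    · subst hxy; omega
    · have hd := hp x hx y hy hxy
      rw [Set.disjoint_left] at hd
      refine ⟨?_, ?_, ?_⟩ <;> intro he
      · exact hd (a := x) ⟨0, by simp, by show (0:ℤ) + x = x; omega⟩
          ⟨a, by simp, by show a + y = x; omega⟩
      · exact hd (a := a + x) ⟨a, by simp, by show a + x = a + x; rfl⟩
          ⟨a + b, by simp, by show a + b + y = a + x; omega⟩
      · exact hd (a := x) ⟨0, by simp, by show (0:ℤ) + x = x; omega⟩
          ⟨a + b, by simp, by show a + b + y = x; omega⟩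
  · intro hA x hx y hy hxy
    rw [Set.disjoint_left]
    intro w hw1 hw2
    obtain ⟨s1, hs1, he1⟩ := hw1
    obtain ⟨s2, hs2, he2⟩ := hw2
    have he1' : s1 + x = w := he1
    have he2' : s2 + y = w := he2
    have H1 := hA x hx y hy
    have H2 := hA y hy x hx
    simp only [Set.mem_insert_iff, Set.mem_singleton_iff] at hs1 hs2
    rcases hs1 with rfl | rfl | rfl <;> rcases hs2 with rfl | rfl | rfl <;> omega

lemma avoid_symm {a b : ℤ} {A : Set ℤ} (h : Avoid a b A) : Avoid b a A := by
  intro x hx y hy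
  have := h x hx y hy
  omega

/-! ### Density basics -/

lemma ncard_window (A : Set ℤ) (n : ℕ) :
    (A ∩ Set.Icc (-(n : ℤ)) (n : ℤ)).ncard = cnt A (-(n : ℤ)) ((n : ℤ) + 1) := by
  have hset : A ∩ Set.Icc (-(n : ℤ)) (n : ℤ) =
      ↑((Finset.Ico (-(n:ℤ)) ((n:ℤ)+1)).filter (fun x => x ∈ A)) := by
    ext x
    simp only [Set.mem_inter_iff, Set.mem_Icc, Finset.coe_filter, Finset.mem_Ico,
      Set.mem_setOf_eq]
    constructor
    · rintro ⟨h1, h2, h3⟩; exact ⟨⟨h2, by omega⟩, h1⟩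
    · rintro ⟨⟨h2, h3⟩, h1⟩; exact ⟨h1, h2, by omega⟩
  rw [hset, Set.ncard_coe_finset]
  rfl

lemma window_card_le (A : Set ℤ) (n : ℕ) :
    ((A ∩ Set.Icc (-(n : ℤ)) (n : ℤ)).ncard : ℝ) ≤ 2 * (n:ℝ) + 1 := by
  have h1 : (A ∩ Set.Icc (-(n : ℤ)) (n : ℤ)).ncard ≤ (Set.Icc (-(n : ℤ)) (n : ℤ)).ncard :=
    Set.ncard_le_ncard Set.inter_subset_right (Set.finite_Icc _ _)
  have h2 : (Set.Icc (-(n : ℤ)) (n : ℤ)).ncard = 2 * n + 1 := by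
    rw [← Finset.coe_Icc, Set.ncard_coe_finset, Int.card_Icc]
    omega
  rw [h2] at h1
  calc ((A ∩ Set.Icc (-(n : ℤ)) (n : ℤ)).ncard : ℝ) ≤ ((2 * n + 1 : ℕ) : ℝ) := by
        exact_mod_cast h1
    _ = 2 * (n:ℝ) + 1 := by push_cast; ring

lemma upperDensity_le_one (A : Set ℤ) : upperDensity A ≤ 1 := by
  apply Filter.limsup_le_of_le
  · apply Filter.isCoboundedUnder_le_of_le Filter.atTop (x := 0)
    intro n
    positivity
  · apply Filter.Eventually.of_forall
    intro n
    rw [div_le_one (by positivity)]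
    exact window_card_le A n

lemma freq_of_limsup_gt {f : ℕ → ℝ} {c : ℝ} (hb : ∀ n, 0 ≤ f n)
    (h : c < Filter.limsup f Filter.atTop) : ∃ᶠ n in Filter.atTop, c < f n := by
  by_contra hc
  rw [Filter.not_frequently] at hc
  have hev : ∀ᶠ n in Filter.atTop, f n ≤ c := by
    filter_upwards [hc] with n hn
    push_neg at hn
    exact hn
  have := Filter.limsup_le_of_le
    (Filter.isCoboundedUnder_le_of_le Filter.atTop (x := 0) hb) hev
  linarith

/-! ### Per-set upper bound -/

lemma density_ub (a b : ℤ) (ha : 0 < a) (hb : 0 < b) (A : Set ℤ) (hA : Avoid a b A)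
    (q : ℝ) (hq0 : 0 ≤ q)
    (hk1 : (((a + 2*b)/3 : ℤ) : ℝ) ≤ q * ((a:ℝ) + 2*b))
    (hk2 : (((2*a + b)/3 : ℤ) : ℝ) ≤ q * (2*(a:ℝ) + b)) :
    upperDensity A ≤ q := by
  by_contra hlt
  push_neg at hlt
  have hδ1 : upperDensity A ≤ 1 := upperDensity_le_one A
  set δ := upperDensity A with hδ
  set γ : ℝ := (q + δ)/2 with hγ
  set β : ℝ := (3*q + δ)/4 with hβ
  have hβq : q < β := by rw [hβ]; linarith
  have hβγ : β < γ := by rw [hβ, hγ]; linarith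
  have hβ0 : 0 ≤ β := by rw [hβ]; linarith
  have hβ1 : β ≤ 1 := by rw [hβ]; linarith
  set ℓ : ℤ := 3*(a+b) with hℓ
  have hℓ0 : 0 ≤ ℓ := by omega
  have hγδ : γ < Filter.limsup
      (fun n : ℕ => ((A ∩ Set.Icc (-(n : ℤ)) (n : ℤ)).ncard : ℝ) / (2 * n + 1))
      Filter.atTop := by
    have : γ < δ := by rw [hγ]; linarith
    exact this
  have hfreq : ∃ᶠ n : ℕ in Filter.atTop,
      γ < ((A ∩ Set.Icc (-(n : ℤ)) (n : ℤ)).ncard : ℝ) / (2 * n + 1) :=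
    freq_of_limsup_gt (fun n => by positivity) hγδ
  obtain ⟨N₀, hN₀⟩ := exists_nat_ge (((ℓ:ℝ) + 1) / (γ - β))
  obtain ⟨N, hNN₀, hfN⟩ := Filter.frequently_atTop.1 hfreq N₀
  have hden : (0:ℝ) < 2*(N:ℝ)+1 := by positivity
  rw [ncard_window] at hfN
  have hcN : γ * (2*(N:ℝ)+1) < (cnt A (-(N:ℤ)) ((N:ℤ)+1) : ℝ) := by
    rw [lt_div_iff₀ hden] at hfN
    linarith
  have hgb : 0 < γ - β := by linarith
  have hLge : ((ℓ:ℝ)+1) ≤ (γ - β)*(2*(N:ℝ)+1) := by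
    have h1 : ((ℓ:ℝ) + 1) / (γ - β) ≤ (N:ℝ) := by
      calc ((ℓ:ℝ) + 1) / (γ - β) ≤ (N₀:ℝ) := hN₀
        _ ≤ (N:ℝ) := by exact_mod_cast hNN₀
    rw [div_le_iff₀ hgb] at h1
    nlinarith
  have hcount : β * (2*(N:ℝ)+1) + (ℓ:ℝ) < (cnt A (-(N:ℤ)) ((N:ℤ)+1) : ℝ) := by
    nlinarith
  have hxL : (-(N:ℤ)) + (2*(N:ℤ)+1) = (N:ℤ)+1 := by ring
  obtain ⟨z, hzA, hgood⟩ := extract A β hβ0 hβ1 ℓ hℓ0 (-(N:ℤ)) (2*(N:ℤ)+1) (by omega)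
    (by rw [hxL]; push_cast; push_cast at hcount; linarith)
  have hg1 := hgood (a+2*b) (by omega) (by omega)
  have hg2 := hgood (2*a+b) (by omega) (by omega)
  have hn1 : (0:ℝ) < (a:ℝ) + 2*b := by
    have : (0:ℤ) < a + 2*b := by omega
    exact_mod_cast this
  have hn2 : (0:ℝ) < 2*(a:ℝ) + b := by
    have : (0:ℤ) < 2*a + b := by omega
    exact_mod_cast this
  have hk1' : (((a+2*b)/3 : ℤ) : ℝ) < (cnt A z (z+(a+2*b)) : ℝ) := by
    have hql : q * ((a:ℝ)+2*b) < β * ((a:ℝ)+2*b) := by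
      exact mul_lt_mul_of_pos_right hβq hn1
    push_cast at hg1
    linarith
  have hk2' : (((2*a+b)/3 : ℤ) : ℝ) < (cnt A z (z+(2*a+b)) : ℝ) := by
    have hql : q * (2*(a:ℝ)+b) < β * (2*(a:ℝ)+b) := by
      exact mul_lt_mul_of_pos_right hβq hn2
    push_cast at hg2
    linarith
  have hc1 : ((a+2*b)/3 : ℤ) < (cnt A z (z+(a+2*b)) : ℤ) := by exact_mod_cast hk1'
  have hc2 : ((2*a+b)/3 : ℤ) < (cnt A z (z+(2*a+b)) : ℤ) := by exact_mod_cast hk2'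
  have hwin : (cnt A z (z + (a + 2*b)) : ℤ) + cnt A z (z + (2*a+b)) ≤ a + b := by
    rcases le_total b a with h|h
    · exact twoWindow ha hb h hA z
    · have h2 := twoWindow hb ha h (avoid_symm hA) z
      have e1 : b + 2*a = 2*a + b := by ring
      have e2 : 2*b + a = a + 2*b := by ring
      rw [e1, e2] at h2
      omega
  omega

/-! ### Construction (lower bound) -/

lemma construct (a b : ℤ) (ha : 0 < a) (hb : 0 < b) (hco : Int.gcd a b = 1) :
    ∃ A : Set ℤ, Avoid a b A ∧
      ((((a+2*b)/3 : ℤ):ℝ)/((a:ℝ)+2*b)) ≤ upperDensity A := by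
  set n : ℤ := a + 2*b with hn
  set k : ℤ := n / 3 with hk
  have hn3 : 3 ≤ n := by omega
  have hk1 : 1 ≤ k := by omega
  have h3k : 3*k ≤ n := by omega
  -- Bezout: b * u ≡ 1 mod n
  obtain ⟨u, w, huw⟩ : ∃ u w, b * u - 1 = n * w := by
    have hbez : (Int.gcd a b : ℤ) = a * Int.gcdA a b + b * Int.gcdB a b := Int.gcd_eq_gcd_ab a b
    rw [hco] at hbez
    refine ⟨Int.gcdB a b - 2 * Int.gcdA a b, -Int.gcdA a b, ?_⟩
    rw [hn]
    linear_combination -hbez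
  set A : Set ℤ := {x : ℤ | ∃ j : ℤ, 0 ≤ j ∧ j < k ∧ (n ∣ x - 3*b*j)} with hA
  have havoid : Avoid a b A := by
    have key : ∀ x ∈ A, ∀ y ∈ A, ∀ d e : ℤ, x - y = d → (n ∣ u * d - e) →
        (e = 1 ∨ e = -1 ∨ e = 2 ∨ e = -2) → False := by
      intro x hx y hy d e hd hdvd he
      obtain ⟨j, hj0, hjk, hdx⟩ := hx
      obtain ⟨j', hj'0, hj'k, hdy⟩ := hy
      obtain ⟨s, hs⟩ := hdx
      obtain ⟨s', hs'⟩ := hdy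
      -- u*d = u*(x - y) = 3*(b*u)*(j - j') + n*u*(s - s')
      have hxy : x - y = 3*b*(j - j') + n*(s - s') := by linear_combination hs - hs'
      have hud : u * d - e = n * (3*w*(j-j') + u*(s-s')) + (3*(j-j') - e) := by
        rw [← hd, hxy]
        linear_combination (3*(j-j'))*huw
      obtain ⟨v, hv⟩ := hdvd
      have ht : 3*(j-j') - e = n * (v - (3*w*(j-j') + u*(s-s'))) := by
        linear_combination hv - hud
      set t : ℤ := v - (3*w*(j-j') + u*(s-s')) with htdef
      rcases lt_trichotomy t 0 with htl | hte | htg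
      · have hmt : n * t ≤ n * (-1) := mul_le_mul_of_nonneg_left (by omega) (by omega)
        omega
      · rw [hte, mul_zero] at ht
        omega
      · have hmt : n * 1 ≤ n * t := mul_le_mul_of_nonneg_left (by omega) (by omega)
        omega
    intro x hx y hy
    refine ⟨?_, ?_, ?_⟩ <;> intro hd
    · -- d = a : u*a + 2 ≡ 0, so e = -2
      apply key x hx y hy a (-2) hd _ (by norm_num)
      refine ⟨u - 2*w, ?_⟩
      have han : a = n - 2*b := by omega
      rw [han]
      linear_combination (-2)*huw
    · -- d = b : e = 1
      apply key x hx y hy b 1 hd _ (by norm_num)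
      exact ⟨w, by linear_combination huw⟩
    · -- d = a + b : a+b = n - b, e = -1
      apply key x hx y hy (a+b) (-1) hd _ (by norm_num)
      refine ⟨u - w, ?_⟩
      have hcn : a + b = n - b := by omega
      rw [hcn]
      linear_combination (-1)*huw
  refine ⟨A, havoid, ?_⟩
  -- counting lower bound for each N
  have hcard : ∀ N : ℕ, (k:ℝ) * (2*(N:ℝ)/(n:ℝ) - ((b:ℝ)+1)) ≤
      ((A ∩ Set.Icc (-(N:ℤ)) (N:ℤ)).ncard : ℝ) := by
    intro N
    classical
    set s₁ : ℤ := -((N:ℤ)/n) with hs₁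
    set s₂ : ℤ := (N:ℤ)/n - b with hs₂
    have hdiv := Int.mul_ediv_add_emod (N:ℤ) n
    have hmod1 : 0 ≤ (N:ℤ) % n := Int.emod_nonneg _ (by omega)
    have hmod2 : (N:ℤ) % n < n := Int.emod_lt_of_pos _ (by omega)
    set P := (Finset.Ico (0:ℤ) k) ×ˢ (Finset.Icc s₁ s₂) with hP
    set T := (Finset.Icc (-(N:ℤ)) (N:ℤ)).filter (fun x => x ∈ A) with hT
    have hmaps : ∀ p ∈ P, (3*b*p.1 + n*p.2) ∈ T := by
      rintro ⟨j, s⟩ hp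
      rw [hP, Finset.mem_product, Finset.mem_Ico, Finset.mem_Icc] at hp
      obtain ⟨⟨hj0, hjk⟩, hss1, hss2⟩ := hp
      rw [hT, Finset.mem_filter, Finset.mem_Icc]
      have hb3j0 : 0 ≤ 3*b*j := by positivity
      have hb3jk : 3*b*j ≤ 3*b*(k-1) := by
        apply mul_le_mul_of_nonneg_left (by omega) (by omega)
      have hbkn : 3*b*(k-1) ≤ b*n - 3*b := by nlinarith
      have hns1 : n*s₁ ≤ n*s := by
        apply mul_le_mul_of_nonneg_left hss1 (by omega)
      have hns2 : n*s ≤ n*s₂ := by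
        apply mul_le_mul_of_nonneg_left hss2 (by omega)
      have hns1' : n*s₁ = -(n*((N:ℤ)/n)) := by rw [hs₁]; ring
      have hns2' : n*s₂ = n*((N:ℤ)/n) - n*b := by rw [hs₂]; ring
      refine ⟨⟨by nlinarith, by nlinarith⟩, ?_⟩
      exact ⟨j, hj0, hjk, ⟨s, by ring⟩⟩
    have hinj : Set.InjOn (fun p : ℤ × ℤ => 3*b*p.1 + n*p.2) ↑P := by
      rintro ⟨j, s⟩ hp ⟨j', s'⟩ hq he
      simp only at he
      rw [hP, Finset.coe_product] at hp hq
      simp only [Set.mem_prod, Finset.coe_Ico, Finset.coe_Icc, Set.mem_Ico, Set.mem_Icc] at hp hq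
      have hjj : n ∣ 3*b*(j - j') := ⟨s' - s, by linear_combination he⟩
      have h3 : n ∣ 3*(j - j') := by
        obtain ⟨v, hv⟩ := hjj
        refine ⟨u*v - 3*w*(j - j'), ?_⟩
        have : 3*(j-j') = u*(3*b*(j-j')) - 3*(j-j')*(b*u - 1) := by ring
        rw [this, hv, huw]
        ring
      have hj0 : j = j' := by
        by_contra hne
        have hne' : 3*(j - j') ≠ 0 := by omega
        have habs : (3*(j-j')).natAbs < n.natAbs := by
          have : |3*(j-j')| < n := by
            rw [abs_lt]
            constructor <;> [omega; omega]
          omega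
        exact hne' (Int.eq_zero_of_dvd_of_natAbs_lt_natAbs h3 habs)
      subst hj0
      have : n * s = n * s' := by omega
      have hss : s = s' := by
        have hn0 : n ≠ 0 := by omega
        exact mul_left_cancel₀ hn0 this
      rw [hss]
    have hcardP : P.card ≤ T.card := Finset.card_le_card_of_injOn _ hmaps hinj
    have hPcard : P.card = k.toNat * (s₂ - s₁ + 1).toNat := by
      rw [hP, Finset.card_product, Int.card_Ico, Int.card_Icc, Int.sub_zero]
      congr 2
      omega
    have hTcard : ((A ∩ Set.Icc (-(N:ℤ)) (N:ℤ)).ncard) = T.card := by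
      rw [hT]
      have hset : A ∩ Set.Icc (-(N:ℤ)) (N:ℤ) =
          ↑((Finset.Icc (-(N:ℤ)) (N:ℤ)).filter (fun x => x ∈ A)) := by
        ext x
        simp only [Set.mem_inter_iff, Set.mem_Icc, Finset.coe_filter, Finset.mem_Icc,
          Set.mem_setOf_eq]
        tauto
      rw [hset, Set.ncard_coe_finset]
    -- real arithmetic
    have hq : (n:ℝ) * ((N:ℤ)/n : ℤ) > (N:ℝ) - n := by
      have : n * ((N:ℤ)/n) > (N:ℤ) - n := by omega
      exact_mod_cast this
    have hnR : (0:ℝ) < (n:ℝ) := by exact_mod_cast (by omega : (0:ℤ) < n)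
    have hdivR : (((N:ℤ)/n : ℤ) : ℝ) > (N:ℝ)/(n:ℝ) - 1 := by
      rw [gt_iff_lt, sub_lt_iff_lt_add, div_lt_iff₀ hnR]
      nlinarith
    have hlen : ((s₂ - s₁ + 1 : ℤ) : ℝ) ≥ 2*(N:ℝ)/(n:ℝ) - ((b:ℝ)+1) := by
      have : ((s₂ - s₁ + 1:ℤ):ℝ) = (((N:ℤ)/n : ℤ):ℝ) + (((N:ℤ)/n : ℤ):ℝ) - (b:ℝ) + 1 := by
        rw [hs₂, hs₁]
        push_cast
        ring
      rw [this]
      have h2 : 2*(N:ℝ)/(n:ℝ) = (N:ℝ)/(n:ℝ) + (N:ℝ)/(n:ℝ) := by ring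
      rw [h2]
      linarith
    have hkR : (0:ℝ) ≤ (k:ℝ) := by exact_mod_cast (by omega : (0:ℤ) ≤ k)
    have hx1 : ((k.toNat : ℕ) : ℝ) = (k:ℝ) := by
      have h := Int.toNat_of_nonneg (by omega : (0:ℤ) ≤ k)
      exact_mod_cast congrArg (fun z : ℤ => (z : ℝ)) h
    have hx2 : ((s₂ - s₁ + 1 : ℤ):ℝ) ≤ (((s₂ - s₁ + 1).toNat : ℕ) : ℝ) := by
      have h := Int.self_le_toNat (s₂ - s₁ + 1)
      exact_mod_cast h
    have hP2 : ((P.card : ℕ):ℝ) = ((k.toNat : ℕ):ℝ) * (((s₂ - s₁ + 1).toNat : ℕ):ℝ) := by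
      rw [hPcard]; push_cast; ring
    have hstep : (k:ℝ) * ((s₂ - s₁ + 1 : ℤ):ℝ) ≤ ((T.card : ℕ) : ℝ) := by
      have h5 : (k:ℝ) * ((s₂ - s₁ + 1 : ℤ):ℝ) ≤ (k:ℝ) * (((s₂ - s₁ + 1).toNat : ℕ):ℝ) :=
        mul_le_mul_of_nonneg_left hx2 hkR
      have h6 : ((P.card : ℕ) : ℝ) ≤ ((T.card : ℕ) : ℝ) := by exact_mod_cast hcardP
      rw [hP2, hx1] at h6
      linarith [h6, h5]
    have h7 : (k:ℝ) * (2*(N:ℝ)/(n:ℝ) - ((b:ℝ)+1)) ≤ (k:ℝ) * ((s₂ - s₁ + 1 : ℤ):ℝ) :=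
      mul_le_mul_of_nonneg_left hlen hkR
    rw [hTcard]
    linarith
  -- pass to limsup
  have hnR : (0:ℝ) < (n:ℝ) := by exact_mod_cast (by omega : (0:ℤ) < n)
  set g : ℕ → ℝ := fun N => (k:ℝ) * (2*(N:ℝ)/(n:ℝ) - ((b:ℝ)+1)) / (2*(N:ℝ)+1) with hg
  have hle : ∀ N : ℕ, g N ≤ ((A ∩ Set.Icc (-(N:ℤ)) (N:ℤ)).ncard : ℝ) / (2*(N:ℝ)+1) := by
    intro N
    rw [hg]
    exact (div_le_div_iff_of_pos_right (by positivity)).2 (hcard N)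
  have h0 : Filter.Tendsto (fun N : ℕ => 1/(N:ℝ)) Filter.atTop (nhds 0) :=
    tendsto_one_div_atTop_nhds_zero_nat
  have hng : (n:ℝ) ≠ 0 := by positivity
  have htend : Filter.Tendsto g Filter.atTop (nhds ((k:ℝ)/(n:ℝ))) := by
    have htend' : Filter.Tendsto
        (fun N : ℕ => ((k:ℝ) * (2/(n:ℝ) - ((b:ℝ)+1)*(1/(N:ℝ)))) / (2 + 1/(N:ℝ)))
        Filter.atTop (nhds (((k:ℝ) * (2/(n:ℝ) - ((b:ℝ)+1)*0)) / (2 + 0))) := by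
      apply Filter.Tendsto.div
      · exact (tendsto_const_nhds.sub (h0.const_mul _)).const_mul _
      · exact tendsto_const_nhds.add h0
      · norm_num
    have hval : ((k:ℝ) * (2/(n:ℝ) - ((b:ℝ)+1)*0)) / (2 + 0) = (k:ℝ)/(n:ℝ) := by
      field_simp
      ring
    rw [hval] at htend'
    apply htend'.congr'
    filter_upwards [Filter.eventually_ge_atTop 1] with N hN
    have hNR : (0:ℝ) < (N:ℝ) := by
      have : (0:ℕ) < N := hN
      exact_mod_cast this
    rw [hg]
    field_simp
  have hlimg : Filter.limsup g Filter.atTop = (k:ℝ)/(n:ℝ) := htend.limsup_eq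
  have hmain : (k:ℝ)/(n:ℝ) ≤ Filter.limsup
      (fun N : ℕ => ((A ∩ Set.Icc (-(N:ℤ)) (N:ℤ)).ncard : ℝ) / (2*(N:ℝ)+1))
      Filter.atTop := by
    rw [← hlimg]
    have hcob : Filter.IsCoboundedUnder (· ≤ ·) Filter.atTop g :=
      (htend.isBoundedUnder_ge).isCoboundedUnder_le
    have hbdd : Filter.IsBoundedUnder (· ≤ ·) Filter.atTop
        (fun N : ℕ => ((A ∩ Set.Icc (-(N:ℤ)) (N:ℤ)).ncard : ℝ) / (2*(N:ℝ)+1)) := by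
      apply Filter.isBoundedUnder_of
      refine ⟨1, fun N => ?_⟩
      rw [div_le_one (by positivity)]
      exact window_card_le A N
    exact Filter.limsup_le_limsup (Filter.Eventually.of_forall hle) hcob hbdd
  have hcast1 : ((a:ℝ) + 2*b) = ((n:ℤ):ℝ) := by rw [hn]; push_cast; ring
  have hcast2 : (((a+2*b)/3 : ℤ):ℝ) = ((k:ℤ):ℝ) := by rw [hk, hn]
  rw [hcast1, hcast2]
  show ((k:ℤ):ℝ)/((n:ℤ):ℝ) ≤ upperDensity A
  unfold upperDensity
  exact hmain

/-! ### Main theorem -/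

theorem stmt11 (l1 l2 : ℤ) (h1 : 0 < l1) (h2 : 0 < l2) (hco : Int.gcd l1 l2 = 1) :
    dP ({0, l1, l1 + l2} : Set ℤ) =
      max ((⌊(1 : ℝ) / 3 * (l1 + 2 * l2)⌋ : ℝ) / (l1 + 2 * l2))
        ((⌊(1 : ℝ) / 3 * (2 * l1 + l2)⌋ : ℝ) / (2 * l1 + l2)) := by
  have hn1R : (0:ℝ) < (l1:ℝ) + 2*l2 := by
    have : (0:ℤ) < l1 + 2*l2 := by omega
    exact_mod_cast this
  have hn2R : (0:ℝ) < 2*(l1:ℝ) + l2 := by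
    have : (0:ℤ) < 2*l1 + l2 := by omega
    exact_mod_cast this
  have hf1 : ⌊(1 : ℝ) / 3 * ((l1:ℝ) + 2 * (l2:ℝ))⌋ = (l1 + 2*l2)/3 := by
    rw [show (1 : ℝ) / 3 * ((l1:ℝ) + 2 * (l2:ℝ)) = ((l1 + 2*l2 : ℤ) : ℝ)/3 by push_cast; ring]
    rw [Int.floor_eq_iff]
    constructor
    · have : (3*((l1 + 2*l2)/3) : ℤ) ≤ l1 + 2*l2 := by omega
      have h' : (3*(((l1 + 2*l2)/3 : ℤ):ℝ)) ≤ ((l1 + 2*l2 : ℤ):ℝ) := by exact_mod_cast this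
      linarith
    · have : (l1 + 2*l2 : ℤ) < 3*((l1 + 2*l2)/3) + 3 := by omega
      have h' : ((l1 + 2*l2 : ℤ):ℝ) < 3*(((l1 + 2*l2)/3 : ℤ):ℝ) + 3 := by exact_mod_cast this
      push_cast
      push_cast at h'
      linarith
  have hf2 : ⌊(1 : ℝ) / 3 * (2 * (l1:ℝ) + (l2:ℝ))⌋ = (2*l1 + l2)/3 := by
    rw [show (1 : ℝ) / 3 * (2 * (l1:ℝ) + (l2:ℝ)) = ((2*l1 + l2 : ℤ) : ℝ)/3 by push_cast; ring]
    rw [Int.floor_eq_iff]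
    constructor
    · have : (3*((2*l1 + l2)/3) : ℤ) ≤ 2*l1 + l2 := by omega
      have h' : (3*(((2*l1 + l2)/3 : ℤ):ℝ)) ≤ ((2*l1 + l2 : ℤ):ℝ) := by exact_mod_cast this
      linarith
    · have : (2*l1 + l2 : ℤ) < 3*((2*l1 + l2)/3) + 3 := by omega
      have h' : ((2*l1 + l2 : ℤ):ℝ) < 3*(((2*l1 + l2)/3 : ℤ):ℝ) + 3 := by exact_mod_cast this
      push_cast
      push_cast at h'
      linarith
  rw [hf1, hf2]
  set q : ℝ := max ((((l1 + 2*l2)/3 : ℤ):ℝ) / ((l1:ℝ) + 2 * l2))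
      ((((2*l1 + l2)/3 : ℤ):ℝ) / (2 * (l1:ℝ) + l2)) with hq
  have hq0 : 0 ≤ q := by
    have h1' : (0:ℝ) ≤ (((l1 + 2*l2)/3 : ℤ):ℝ) / ((l1:ℝ) + 2 * l2) := by
      apply div_nonneg _ (le_of_lt hn1R)
      have : (0:ℤ) ≤ (l1 + 2*l2)/3 := by omega
      exact_mod_cast this
    exact le_trans h1' (le_max_left _ _)
  apply le_antisymm
  · apply Real.sSup_le _ hq0
    rintro x ⟨A, hpack, rfl⟩
    have hav : Avoid l1 l2 A := (packing_iff_avoid l1 l2 h1 h2 A).1 hpack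
    apply density_ub l1 l2 h1 h2 A hav q hq0
    · have hm := le_max_left ((((l1 + 2*l2)/3 : ℤ):ℝ) / ((l1:ℝ) + 2 * l2))
        ((((2*l1 + l2)/3 : ℤ):ℝ) / (2 * (l1:ℝ) + l2))
      rw [← hq, div_le_iff₀ hn1R] at hm
      linarith
    · have hm := le_max_right ((((l1 + 2*l2)/3 : ℤ):ℝ) / ((l1:ℝ) + 2 * l2))
        ((((2*l1 + l2)/3 : ℤ):ℝ) / (2 * (l1:ℝ) + l2))
      rw [← hq, div_le_iff₀ hn2R] at hm
      linarith
  · have hbdd : BddAbove (upperDensity '' {A | SPacking ({0, l1, l1 + l2} : Set ℤ) A}) := by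
      refine ⟨1, ?_⟩
      rintro x ⟨A, _, rfl⟩
      exact upperDensity_le_one A
    apply max_le
    · obtain ⟨A, hav, hdens⟩ := construct l1 l2 h1 h2 hco
      have hmem : upperDensity A ∈ upperDensity '' {A | SPacking ({0, l1, l1 + l2} : Set ℤ) A} :=
        ⟨A, (packing_iff_avoid l1 l2 h1 h2 A).2 hav, rfl⟩
      calc (((l1 + 2*l2)/3 : ℤ):ℝ) / ((l1:ℝ) + 2 * l2) ≤ upperDensity A := hdens
        _ ≤ dP ({0, l1, l1 + l2} : Set ℤ) := le_csSup hbdd hmem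
    · obtain ⟨A, hav, hdens⟩ := construct l2 l1 h2 h1 (by rw [Int.gcd_comm]; exact hco)
      have hav' : Avoid l1 l2 A := avoid_symm hav
      have hmem : upperDensity A ∈ upperDensity '' {A | SPacking ({0, l1, l1 + l2} : Set ℤ) A} :=
        ⟨A, (packing_iff_avoid l1 l2 h1 h2 A).2 hav', rfl⟩
      have he1 : (((l2 + 2*l1)/3 : ℤ):ℝ) = (((2*l1 + l2)/3 : ℤ):ℝ) := by
        rw [show l2 + 2*l1 = 2*l1 + l2 from by ring]
      have he2 : ((l2:ℝ) + 2 * l1) = (2 * (l1:ℝ) + l2) := by ring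
      rw [he1, he2] at hdens
      calc (((2*l1 + l2)/3 : ℤ):ℝ) / (2 * (l1:ℝ) + l2) ≤ upperDensity A := hdens
        _ ≤ dP ({0, l1, l1 + l2} : Set ℤ) := le_csSup hbdd hmem
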